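/- Let φ be a real-valued C¹ function on [-1,1]. Then lim_{μ→0⁺} ∫_{-1}^{1} φ(σ)/(σ - iμ) dσ = iπ φ(0) + ∫_{-1}^{1} (∫_0^1 φ'(σθ) dθ) dσ. -/

import Mathlib

open MeasureTheory Real Filter Set

theorem limit_principal_value
    (φ : ℝ → ℝ) (hφ : ContDiffOn ℝ 1 φ (Icc (-1) 1)) :
    Tendsto
      (fun μ : ℝ => ∫ σ in (-1:ℝ)..1, (φ σ : ℂ) / ((σ : ℂ) - μ * Complex.I))
      (nhdsWithin 0 (Ioi 0))
      (nhds ((Real.pi : ℂ) * Complex.I * (φ 0 : ℂ) +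
        ((∫ σ in (-1:ℝ)..1, ∫ θ in (0:ℝ)..1,
          derivWithin φ (Icc (-1) 1) (σ * θ) : ℝ) : ℂ))) := by
  have hIcc : UniqueDiffOn ℝ (Icc (-1:ℝ) 1) := uniqueDiffOn_Icc (by norm_num)
  set g : ℝ → ℝ := derivWithin φ (Icc (-1) 1) with hgdef
  have hgc : ContinuousOn g (Icc (-1) 1) :=
    hφ.continuousOn_derivWithin hIcc le_rfl
  have hclamp : ∀ x : ℝ, max (-1) (min 1 x) ∈ Icc (-1:ℝ) 1 := fun x =>
    ⟨le_max_left _ _, max_le (by norm_num) (min_le_left _ _)⟩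
  set G : ℝ → ℝ := fun x => g (max (-1) (min 1 x)) with hGdef
  have hGc : Continuous G := hgc.comp_continuous (continuous_const.max (continuous_const.min continuous_id)) hclamp
  have hGeq : ∀ x ∈ Icc (-1:ℝ) 1, G x = g x := by
    intro x hx
    simp only [hGdef]
    rw [min_eq_right hx.2, max_eq_right hx.1]
  set ψ : ℝ → ℝ := fun σ => ∫ θ in (0:ℝ)..1, G (σ * θ) with hψdef
  have hψc : Continuous ψ := by
    apply intervalIntegral.continuous_parametric_intervalIntegral_of_continuous'
      (f := fun σ θ => G (σ * θ)) (μ := volume)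
    exact hGc.comp (continuous_fst.mul continuous_snd)
  have hkey : ∀ σ ∈ Icc (-1:ℝ) 1, φ σ = φ 0 + σ * ψ σ := by
    intro σ hσ
    have hsub : uIcc (0:ℝ) σ ⊆ Icc (-1:ℝ) 1 :=
      uIcc_subset_Icc ⟨by norm_num, by norm_num⟩ hσ
    have hFTC : (∫ t in (0:ℝ)..σ, G t) = φ σ - φ 0 := by
      rw [intervalIntegral.integral_congr (g := g)
        (fun t ht => hGeq t (hsub ht))]
      apply intervalIntegral.integral_eq_sub_of_hasDeriv_right
      · exact (hφ.continuousOn).mono hsub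
      · intro x hx
        have hx' : x ∈ Ioo (-1:ℝ) 1 := by
          constructor
          · exact lt_of_le_of_lt (le_min (by norm_num) hσ.1) hx.1
          · exact lt_of_lt_of_le hx.2 (max_le (by norm_num) hσ.2)
        have hmem : Icc (-1:ℝ) 1 ∈ nhds x := Icc_mem_nhds hx'.1 hx'.2
        have hd := ((hφ.differentiableOn one_ne_zero) x
          (Ioo_subset_Icc_self hx')).hasDerivWithinAt
        exact (hd.hasDerivAt hmem).hasDerivWithinAt
      · exact (hgc.mono hsub).intervalIntegrable
    have h2 : σ • ∫ θ in (0:ℝ)..1, G (σ * θ) = ∫ t in (σ*0)..(σ*1), G t :=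
      intervalIntegral.smul_integral_comp_mul_left _ _
    simp only [mul_zero, mul_one] at h2
    have h3 : σ * ψ σ = φ σ - φ 0 := by
      rw [hψdef, ← smul_eq_mul, h2, hFTC]
    linarith
  have himc : ∀ (μ σ : ℝ), ((σ:ℂ) - μ * Complex.I).im = -μ := by
    intro μ σ; simp
  have hne : ∀ μ : ℝ, 0 < μ → ∀ σ : ℝ, ((σ:ℂ) - μ * Complex.I) ≠ 0 := by
    intro μ hμ σ h
    have him : ((σ:ℂ) - μ * Complex.I).im = 0 := by rw [h]; simp
    rw [himc] at him
    linarith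
  -- splitting
  have hsplit : ∀ μ : ℝ, 0 < μ →
      (∫ σ in (-1:ℝ)..1, (φ σ : ℂ) / ((σ:ℂ) - μ * Complex.I)) =
      (φ 0 : ℂ) * (∫ σ in (-1:ℝ)..1, ((σ:ℂ) - μ * Complex.I)⁻¹) +
      ∫ σ in (-1:ℝ)..1, ((σ * ψ σ : ℝ) : ℂ) / ((σ:ℂ) - μ * Complex.I) := by
    intro μ hμ
    have hc0 : Continuous fun σ : ℝ => ((σ:ℂ) - μ * Complex.I) :=
      Complex.continuous_ofReal.sub continuous_const
    have hc1 : Continuous fun σ : ℝ => ((σ:ℂ) - μ * Complex.I)⁻¹ :=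
      hc0.inv₀ (hne μ hμ)
    have hc2 : Continuous fun σ : ℝ => ((σ * ψ σ : ℝ) : ℂ) / ((σ:ℂ) - μ * Complex.I) :=
      (Complex.continuous_ofReal.comp (continuous_id.mul hψc)).div hc0 (hne μ hμ)
    have h1 : IntervalIntegrable
        (fun σ : ℝ => (φ 0 : ℂ) * ((σ:ℂ) - μ * Complex.I)⁻¹) volume (-1) 1 :=
      (continuous_const.mul hc1).intervalIntegrable _ _
    have h2 : IntervalIntegrable
        (fun σ : ℝ => ((σ * ψ σ : ℝ) : ℂ) / ((σ:ℂ) - μ * Complex.I)) volume (-1) 1 :=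
      hc2.intervalIntegrable _ _
    rw [← intervalIntegral.integral_const_mul, ← intervalIntegral.integral_add h1 h2]
    apply intervalIntegral.integral_congr
    intro σ hσ
    have hσ' : σ ∈ Icc (-1:ℝ) 1 := by
      rwa [uIcc_of_le (by norm_num : (-1:ℝ) ≤ 1)] at hσ
    show (φ σ : ℂ) / ((σ:ℂ) - μ * Complex.I) =
      (φ 0 : ℂ) * ((σ:ℂ) - μ * Complex.I)⁻¹ +
        ((σ * ψ σ : ℝ) : ℂ) / ((σ:ℂ) - μ * Complex.I)
    rw [hkey σ hσ']
    have hd := hne μ hμ σ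
    push_cast
    field_simp
  -- the log integral
  have hlog : ∀ μ : ℝ, 0 < μ → (∫ σ in (-1:ℝ)..1, ((σ:ℂ) - μ * Complex.I)⁻¹) =
      Complex.log (1 - μ * Complex.I) - Complex.log (-1 - μ * Complex.I) := by
    intro μ hμ
    have hc0 : Continuous fun σ : ℝ => ((σ:ℂ) - μ * Complex.I) :=
      Complex.continuous_ofReal.sub continuous_const
    have hc1 : Continuous fun σ : ℝ => ((σ:ℂ) - μ * Complex.I)⁻¹ :=
      hc0.inv₀ (hne μ hμ)
    have hder : ∀ σ ∈ uIcc (-1:ℝ) 1,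
        HasDerivAt (fun s : ℝ => Complex.log ((s:ℂ) - μ * Complex.I))
          (((σ:ℂ) - μ * Complex.I)⁻¹) σ := by
      intro σ _
      have hmem : ((σ:ℂ) - μ * Complex.I) ∈ Complex.slitPlane := by
        rw [Complex.mem_slitPlane_iff]
        right
        rw [himc]
        exact neg_ne_zero.mpr hμ.ne'
      have hl := Complex.hasDerivAt_log hmem
      have hsubd : HasDerivAt (fun z : ℂ => z - μ * Complex.I) 1 ((σ:ℂ)) :=
        (hasDerivAt_id _).sub_const _
      have hcomp := hl.comp ((σ:ℂ)) hsubd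
      simp only [mul_one] at hcomp
      exact hcomp.comp_ofReal
    rw [intervalIntegral.integral_eq_sub_of_hasDerivAt hder
      (hc1.intervalIntegrable _ _)]
    norm_num
  have hT1 : Tendsto (fun μ : ℝ => Complex.log (1 - μ * Complex.I))
      (nhdsWithin 0 (Ioi 0)) (nhds 0) := by
    have hmap : Tendsto (fun μ : ℝ => (1:ℂ) - μ * Complex.I) (nhds 0) (nhds 1) := by
      have hc : Continuous fun μ : ℝ => (1:ℂ) - μ * Complex.I :=
        continuous_const.sub (Complex.continuous_ofReal.mul continuous_const)
      have := hc.tendsto 0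
      simpa using this
    have hcl : ContinuousAt Complex.log 1 :=
      continuousAt_clog (by simp [Complex.mem_slitPlane_iff])
    have hmap' : Tendsto (fun μ : ℝ => (1:ℂ) - μ * Complex.I)
        (nhdsWithin 0 (Ioi 0)) (nhds 1) := hmap.mono_left nhdsWithin_le_nhds
    have := hcl.tendsto.comp hmap'
    rw [Complex.log_one] at this
    exact this
  have hT2 : Tendsto (fun μ : ℝ => Complex.log (-1 - μ * Complex.I))
      (nhdsWithin 0 (Ioi 0)) (nhds (-((Real.pi : ℂ) * Complex.I))) := by
    have key := Complex.tendsto_log_nhdsWithin_im_neg_of_re_neg_of_im_zero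
      (z := (-1:ℂ)) (by norm_num) (by norm_num)
    have hmap : Tendsto (fun μ : ℝ => (-1:ℂ) - μ * Complex.I)
        (nhdsWithin 0 (Ioi 0)) (nhdsWithin (-1) {z : ℂ | z.im < 0}) := by
      rw [tendsto_nhdsWithin_iff]
      constructor
      · have hc : Continuous fun μ : ℝ => (-1:ℂ) - μ * Complex.I :=
          continuous_const.sub (Complex.continuous_ofReal.mul continuous_const)
        have := hc.tendsto 0
        simp only [Complex.ofReal_zero, zero_mul, sub_zero] at this
        exact this.mono_left nhdsWithin_le_nhds
      · filter_upwards [self_mem_nhdsWithin] with μ hμ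
        have him : ((-1:ℂ) - μ * Complex.I).im = -μ := by simp
        simp only [mem_setOf_eq, him]
        have : (0:ℝ) < μ := hμ
        linarith
    have hcomp := key.comp hmap
    have habs : ‖(-1 : ℂ)‖ = 1 := by simp
    rw [habs, Real.log_one] at hcomp
    simpa [Function.comp_def] using hcomp
  have hA : Tendsto (fun μ : ℝ => (φ 0 : ℂ) *
      ∫ σ in (-1:ℝ)..1, ((σ:ℂ) - μ * Complex.I)⁻¹)
      (nhdsWithin 0 (Ioi 0)) (nhds ((Real.pi : ℂ) * Complex.I * (φ 0 : ℂ))) := by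
    have h0 : Tendsto (fun μ : ℝ => (φ 0 : ℂ) *
        (Complex.log (1 - μ * Complex.I) - Complex.log (-1 - μ * Complex.I)))
        (nhdsWithin 0 (Ioi 0))
        (nhds ((φ 0 : ℂ) * (0 - -((Real.pi : ℂ) * Complex.I)))) :=
      tendsto_const_nhds.mul (hT1.sub hT2)
    have heq : (φ 0 : ℂ) * (0 - -((Real.pi : ℂ) * Complex.I)) =
        (Real.pi : ℂ) * Complex.I * (φ 0 : ℂ) := by ring
    rw [heq] at h0
    apply Tendsto.congr' _ h0
    filter_upwards [self_mem_nhdsWithin] with μ hμ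
    rw [hlog μ hμ]
  have hB : Tendsto (fun μ : ℝ =>
      ∫ σ in (-1:ℝ)..1, ((σ * ψ σ : ℝ) : ℂ) / ((σ:ℂ) - μ * Complex.I))
      (nhdsWithin 0 (Ioi 0)) (nhds (∫ σ in (-1:ℝ)..1, ((ψ σ : ℝ) : ℂ))) := by
    apply intervalIntegral.tendsto_integral_filter_of_dominated_convergence
      (bound := fun σ => |ψ σ|)
    · filter_upwards [self_mem_nhdsWithin] with μ hμ
      have hc0 : Continuous fun σ : ℝ => ((σ:ℂ) - μ * Complex.I) :=
      Complex.continuous_ofReal.sub continuous_const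
      exact ((Complex.continuous_ofReal.comp (continuous_id.mul hψc)).div hc0
        (hne μ hμ)).aestronglyMeasurable
    · filter_upwards [self_mem_nhdsWithin] with μ hμ
      refine Eventually.of_forall (fun σ _ => ?_)
      have hnz := hne μ hμ σ
      have hpos : 0 < ‖(σ:ℂ) - μ * Complex.I‖ := norm_pos_iff.mpr hnz
      rw [norm_div]
      rw [div_le_iff₀ hpos]
      have h1 : ‖((σ * ψ σ : ℝ) : ℂ)‖ = |σ| * |ψ σ| := by
        rw [Complex.norm_real, norm_eq_abs, abs_mul]
      have h2 : |σ| ≤ ‖(σ:ℂ) - μ * Complex.I‖ := by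
        have := Complex.abs_re_le_norm ((σ:ℂ) - μ * Complex.I)
        simpa using this
      rw [h1]
      calc |σ| * |ψ σ| ≤ ‖(σ:ℂ) - μ * Complex.I‖ * |ψ σ| :=
            mul_le_mul_of_nonneg_right h2 (abs_nonneg _)
        _ = |ψ σ| * ‖(σ:ℂ) - μ * Complex.I‖ := by ring
    · exact (hψc.abs.intervalIntegrable _ _)
    · have h0 : ∀ᵐ σ : ℝ ∂volume, σ ≠ 0 := by
        have : (volume : Measure ℝ) {0} = 0 := measure_singleton 0
        rw [ae_iff]
        convert this using 2
        ext σ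
        simp
      filter_upwards [h0] with σ hσ0 _
      have hσc : ((σ:ℝ):ℂ) ≠ 0 := Complex.ofReal_ne_zero.mpr hσ0
      have hd : Tendsto (fun μ : ℝ => (σ:ℂ) - μ * Complex.I)
          (nhdsWithin 0 (Ioi 0)) (nhds ((σ:ℂ))) := by
        have hc : Continuous fun μ : ℝ => (σ:ℂ) - μ * Complex.I :=
          continuous_const.sub (Complex.continuous_ofReal.mul continuous_const)
        have := hc.tendsto 0
        simp only [Complex.ofReal_zero, zero_mul, sub_zero] at this
        exact this.mono_left nhdsWithin_le_nhds
      have hconst : Tendsto (fun _ : ℝ => ((σ * ψ σ : ℝ) : ℂ))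
          (nhdsWithin 0 (Ioi 0)) (nhds ((σ * ψ σ : ℝ) : ℂ)) := tendsto_const_nhds
      have := hconst.div hd hσc
      have hval : ((σ * ψ σ : ℝ) : ℂ) / (σ:ℂ) = ((ψ σ : ℝ) : ℂ) := by
        push_cast
        field_simp
      rwa [hval] at this
  have hval : (∫ σ in (-1:ℝ)..1, ((ψ σ : ℝ) : ℂ)) =
      ((∫ σ in (-1:ℝ)..1, ∫ θ in (0:ℝ)..1,
        derivWithin φ (Icc (-1) 1) (σ * θ) : ℝ) : ℂ) := by
    rw [intervalIntegral.integral_ofReal, Complex.ofReal_inj]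
    apply intervalIntegral.integral_congr
    intro σ hσ
    have hσ' : σ ∈ Icc (-1:ℝ) 1 := by
      rwa [uIcc_of_le (by norm_num : (-1:ℝ) ≤ 1)] at hσ
    apply intervalIntegral.integral_congr
    intro θ hθ
    have hθ' : θ ∈ Icc (0:ℝ) 1 := by
      rwa [uIcc_of_le (by norm_num : (0:ℝ) ≤ 1)] at hθ
    have hmem : σ * θ ∈ Icc (-1:ℝ) 1 := by
      constructor
      · nlinarith [hσ'.1, hσ'.2, hθ'.1, hθ'.2]
      · nlinarith [hσ'.1, hσ'.2, hθ'.1, hθ'.2]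
    simpa using hGeq _ hmem
  rw [hval] at hB
  have hfinal := hA.add hB
  apply Tendsto.congr' _ hfinal
  filter_upwards [self_mem_nhdsWithin] with μ hμ
  exact (hsplit μ hμ).symm
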